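/- For any grid function v ∈ V_h^0, the discrete inner product satisfies (H_h v, Λ_h v) ≤ 0. -/

import Mathlib

open Finset

noncomputable section

/-- A grid function on the `(M_x+1) × (M_y+1)` grid, represented as a total function
(only the values at indices `0 ≤ i ≤ M_x`, `0 ≤ j ≤ M_y` are relevant). -/
abbrev GridFn : Type := ℕ → ℕ → ℝ

/-- Spatial stepsize `h_x = 1/M_x`. -/
def hx (Mx : ℕ) : ℝ := ((Mx : ℝ))⁻¹

/-- Spatial stepsize `h_y = 1/M_y`. -/
def hy (My : ℕ) : ℝ := ((My : ℝ))⁻¹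

/-- Second-order difference in the x-direction:
`δ_x² v_{i,j} = (v_{i+1,j} − 2v_{i,j} + v_{i−1,j})/h_x²` (used for `1 ≤ i ≤ M_x−1`). -/
def dxx (Mx : ℕ) (v : GridFn) : GridFn := fun i j =>
  (v (i + 1) j - 2 * v i j + v (i - 1) j) / (hx Mx) ^ 2

/-- Second-order difference in the y-direction. -/
def dyy (My : ℕ) (v : GridFn) : GridFn := fun i j =>
  (v i (j + 1) - 2 * v i j + v i (j - 1)) / (hy My) ^ 2

/-- Compact operator `H_x`: `H_x v_{i,j} = v_{i,j} + (h_x²/12) δ_x² v_{i,j}` for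
`1 ≤ i ≤ M_x−1`, and `H_x v_{i,j} = v_{i,j}` for `i ∈ {0, M_x}`. -/
def Hcx (Mx : ℕ) (v : GridFn) : GridFn := fun i j =>
  if 1 ≤ i ∧ i ≤ Mx - 1 then v i j + (hx Mx) ^ 2 / 12 * dxx Mx v i j else v i j

/-- Compact operator `H_y`. -/
def Hcy (My : ℕ) (v : GridFn) : GridFn := fun i j =>
  if 1 ≤ j ∧ j ≤ My - 1 then v i j + (hy My) ^ 2 / 12 * dyy My v i j else v i j

/-- Compact operator `H_h = H_x H_y`. -/
def Hch (Mx My : ℕ) (v : GridFn) : GridFn := Hcx Mx (Hcy My v)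

/-- `Λ_h v = H_y(δ_x² v) + H_x(δ_y² v)` (at interior indices). -/
def Lamh (Mx My : ℕ) (v : GridFn) : GridFn := fun i j =>
  Hcy My (dxx Mx v) i j + Hcx Mx (dyy My v) i j

/-- Discrete L² inner product
`(v,w) = h_x h_y Σ_{i=1}^{M_x−1} Σ_{j=1}^{M_y−1} v_{i,j} w_{i,j}`. -/
def innp (Mx My : ℕ) (v w : GridFn) : ℝ :=
  hx Mx * hy My * ∑ i ∈ Icc 1 (Mx - 1), ∑ j ∈ Icc 1 (My - 1), v i j * w i j

/-- Discrete L² norm `‖v‖ = (v,v)^{1/2}`. -/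
def nrm (Mx My : ℕ) (v : GridFn) : ℝ := Real.sqrt (innp Mx My v v)

/-- Discrete maximum norm `‖v‖_∞ = max_{1≤i≤M_x−1, 1≤j≤M_y−1} |v_{i,j}|`. -/
def nrmInf (Mx My : ℕ) (v : GridFn) : ℝ :=
  ((Icc 1 (Mx - 1)) ×ˢ (Icc 1 (My - 1))).fold max 0 fun p => |v p.1 p.2|

/-- `‖δ_x v‖_x² = h_x h_y Σ_{i=1}^{M_x} Σ_{j=1}^{M_y−1} (δ_x v_{i−1/2,j})²`. -/
def nrmX2 (Mx My : ℕ) (v : GridFn) : ℝ :=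
  hx Mx * hy My * ∑ i ∈ Icc 1 Mx, ∑ j ∈ Icc 1 (My - 1),
    ((v i j - v (i - 1) j) / hx Mx) ^ 2

/-- `‖δ_y v‖_y² = h_x h_y Σ_{i=1}^{M_x−1} Σ_{j=1}^{M_y} (δ_y v_{i,j−1/2})²`. -/
def nrmY2 (Mx My : ℕ) (v : GridFn) : ℝ :=
  hx Mx * hy My * ∑ i ∈ Icc 1 (Mx - 1), ∑ j ∈ Icc 1 My,
    ((v i j - v i (j - 1)) / hy My) ^ 2

/-- Membership in `V_h^0`: a grid function vanishing on the boundary of the grid. -/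
def BZero (Mx My : ℕ) (v : GridFn) : Prop :=
  ∀ i ≤ Mx, ∀ j ≤ My, (i = 0 ∨ i = Mx ∨ j = 0 ∨ j = My) → v i j = 0

/-- Interior grid indices: `1 ≤ i ≤ M_x−1`, `1 ≤ j ≤ M_y−1`. -/
def interiorIdx (Mx My i j : ℕ) : Prop :=
  1 ≤ i ∧ i ≤ Mx - 1 ∧ 1 ≤ j ∧ j ≤ My - 1

/-- Time average `w̄^{n−1/2} = (w^n + w^{n−1})/2` of a sequence of grid functions. -/
def tbar (u : ℕ → GridFn) (n : ℕ) : GridFn := fun i j => (u n i j + u (n - 1) i j) / 2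

/-- Time difference `δ_t w^{n−1/2} = (w^n − w^{n−1})/τ` of a sequence of grid functions. -/
def tdiff (τ : ℝ) (u : ℕ → GridFn) (n : ℕ) : GridFn := fun i j =>
  (u n i j - u (n - 1) i j) / τ

/-- Extrapolation `l^{*,1} = l⁰`, `l^{*,n} = (3 l^{n−1} − l^{n−2})/2` for `n ≥ 2`. -/
def extrap (u : ℕ → GridFn) (n : ℕ) : GridFn :=
  if n = 1 then u 0 else fun i j => (3 * u (n - 1) i j - u (n - 2) i j) / 2

/-- For any `v ∈ V_h^0`, `(H_h v, Λ_h v) ≤ 0`. -/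
lemma abel_sum (a B : ℕ → ℝ) (n : ℕ) :
    ∑ k ∈ range n, a (k+1) * (B (k+1) - B k)
      = a n * B n - a 0 * B 0 - ∑ k ∈ range n, B k * (a (k+1) - a k) := by
  induction n with
  | zero => simp
  | succ n ih => rw [Finset.sum_range_succ, Finset.sum_range_succ, ih]; ring

lemma diff_sq_le (B : ℕ → ℝ) (n : ℕ) :
    ∑ k ∈ range n, (B (k+1) - B k)^2 ≤ 4 * ∑ k ∈ range (n+1), B k ^ 2 := by
  have h1 : ∑ k ∈ range n, (B (k+1) - B k)^2
      ≤ ∑ k ∈ range n, (2 * B (k+1)^2 + 2 * B k ^2) :=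
    Finset.sum_le_sum (fun k _ => by nlinarith [sq_nonneg (B (k+1) + B k)])
  have h2 : ∑ k ∈ range n, (2 * B (k+1)^2 + 2 * B k ^2)
      = 2 * ∑ k ∈ range n, B (k+1)^2 + 2 * ∑ k ∈ range n, B k ^2 := by
    rw [Finset.sum_add_distrib, Finset.mul_sum, Finset.mul_sum]
  have h3 : ∑ k ∈ range n, B (k+1)^2 ≤ ∑ k ∈ range (n+1), B k ^2 := by
    rw [Finset.sum_range_succ' (fun k => B k ^ 2) n]
    exact le_add_of_nonneg_right (sq_nonneg _)
  have h4 : ∑ k ∈ range n, B k ^2 ≤ ∑ k ∈ range (n+1), B k ^2 := by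
    rw [Finset.sum_range_succ]
    exact le_add_of_nonneg_right (sq_nonneg _)
  linarith

lemma oneD (n : ℕ) (h : ℝ) (hh : 0 < h) (a : ℕ → ℝ) (h0 : a 0 = 0) (hn : a (n+1) = 0) :
    ∑ k ∈ range n,
      (a (k+1) + h^2/12 * ((a (k+2) - 2*a (k+1) + a k)/h^2)) *
        ((a (k+2) - 2*a (k+1) + a k)/h^2) ≤ 0 := by
  set B : ℕ → ℝ := fun k => a (k+1) - a k with hB
  have hne : h ≠ 0 := ne_of_gt hh
  have hterm : ∀ k, (a (k+1) + h^2/12 * ((a (k+2) - 2*a (k+1) + a k)/h^2)) *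
        ((a (k+2) - 2*a (k+1) + a k)/h^2)
      = (1/h^2) * (a (k+1) * (B (k+1) - B k) + (1/12) * (B (k+1) - B k)^2) := by
    intro k
    simp only [hB]
    field_simp
    ring
  rw [Finset.sum_congr rfl (fun k _ => hterm k), ← Finset.mul_sum]
  have hsplit : ∑ k ∈ range n, (a (k+1) * (B (k+1) - B k) + (1/12) * (B (k+1) - B k)^2)
      = (∑ k ∈ range n, a (k+1) * (B (k+1) - B k))
        + (1/12) * ∑ k ∈ range n, (B (k+1) - B k)^2 := by
    rw [Finset.sum_add_distrib, Finset.mul_sum]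
  have hA : ∑ k ∈ range n, a (k+1) * (B (k+1) - B k)
      = -∑ k ∈ range (n+1), B k ^ 2 := by
    rw [abel_sum a B n, Finset.sum_range_succ]
    have h1 : a n * B n = -(B n)^2 := by simp only [hB, hn]; ring
    have h2 : ∀ k, B k * (a (k+1) - a k) = B k ^ 2 := fun k => by simp only [hB]; ring
    rw [Finset.sum_congr rfl (fun k _ => h2 k), h1, h0]
    ring
  have hBd := diff_sq_le B n
  have hT : (0:ℝ) ≤ ∑ k ∈ range (n+1), B k ^ 2 :=
    Finset.sum_nonneg (fun k _ => sq_nonneg _)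
  have hinner : ∑ k ∈ range n, (a (k+1) * (B (k+1) - B k) + (1/12) * (B (k+1) - B k)^2) ≤ 0 := by
    rw [hsplit, hA]; nlinarith
  have hpos : (0:ℝ) ≤ 1/h^2 := by positivity
  nlinarith

lemma comm1 (Mx My : ℕ) (v : GridFn) (i j : ℕ) :
    Hcy My (dxx Mx v) i j = dxx Mx (Hcy My v) i j := by
  simp only [Hcy, dxx, dyy]
  split_ifs with h <;> ring

lemma comm2 (Mx My : ℕ) (v : GridFn) (i j : ℕ) :
    Hcx Mx (dyy My v) i j = dyy My (Hcx Mx v) i j := by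
  simp only [Hcx, dxx, dyy]
  split_ifs with h <;> ring

lemma commH (Mx My : ℕ) (v : GridFn) (i j : ℕ) :
    Hcx Mx (Hcy My v) i j = Hcy My (Hcx Mx v) i j := by
  simp only [Hcx, Hcy, dxx, dyy]
  split_ifs <;> ring
/-- For any `v ∈ V_h^0`, `(H_h v, Λ_h v) ≤ 0`. -/
theorem stmt8 (Mx My : ℕ) (hMx : 2 ≤ Mx) (hMy : 2 ≤ My) (v : GridFn)
    (hv : BZero Mx My v) :
    innp Mx My (Hch Mx My v) (Lamh Mx My v) ≤ 0 := by
  have hMxR : (0:ℝ) < Mx := by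
    have : 0 < Mx := by omega
    exact_mod_cast this
  have hMyR : (0:ℝ) < My := by
    have : 0 < My := by omega
    exact_mod_cast this
  have hx0 : 0 < hx Mx := inv_pos.mpr hMxR
  have hy0 : 0 < hy My := inv_pos.mpr hMyR
  -- boundary values of Hcy v and Hcx v
  have hwb : ∀ i, (i = 0 ∨ i = Mx) → ∀ j, j ≤ My - 1 → Hcy My v i j = 0 := by
    intro i hi j hj
    have hiM : i ≤ Mx := by omega
    have hv0 : ∀ j', j' ≤ My → v i j' = 0 := fun j' hj' => hv i hiM j' hj' (by omega)
    simp only [Hcy, dyy]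
    split_ifs with hc
    · rw [hv0 j (by omega), hv0 (j+1) (by omega), hv0 (j-1) (by omega)]; ring
    · exact hv0 j (by omega)
  have hub : ∀ j, (j = 0 ∨ j = My) → ∀ i, i ≤ Mx - 1 → Hcx Mx v i j = 0 := by
    intro j hj i hi
    have hv0 : ∀ i', i' ≤ Mx → v i' j = 0 := fun i' hi' => hv i' hi' j (by omega) (by omega)
    simp only [Hcx, dxx]
    split_ifs with hc
    · rw [hv0 i (by omega), hv0 (i+1) (by omega), hv0 (i-1) (by omega)]; ring
    · exact hv0 i (by omega)
  -- Term X
  have hTX : ∑ i ∈ Icc 1 (Mx-1), ∑ j ∈ Icc 1 (My-1),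
      Hch Mx My v i j * Hcy My (dxx Mx v) i j ≤ 0 := by
    rw [Finset.sum_comm]
    apply Finset.sum_nonpos
    intro j hj
    obtain ⟨hj1, hj2⟩ := Finset.mem_Icc.mp hj
    set a : ℕ → ℝ := fun i => Hcy My v i j with ha
    have hstep : ∀ i ∈ Icc 1 (Mx-1), Hch Mx My v i j * Hcy My (dxx Mx v) i j
        = (a i + (hx Mx)^2/12 * ((a (i+1) - 2*a i + a (i-1))/(hx Mx)^2)) *
          ((a (i+1) - 2*a i + a (i-1))/(hx Mx)^2) := by
      intro i hi
      obtain ⟨hi1, hi2⟩ := Finset.mem_Icc.mp hi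
      have e1 : Hcy My (dxx Mx v) i j
          = (a (i+1) - 2*a i + a (i-1))/(hx Mx)^2 := by
        rw [comm1]; simp only [dxx, ha]
      have e2 : Hch Mx My v i j
          = a i + (hx Mx)^2/12 * ((a (i+1) - 2*a i + a (i-1))/(hx Mx)^2) := by
        simp only [Hch, Hcx, ha]
        rw [if_pos (⟨hi1, hi2⟩ : 1 ≤ i ∧ i ≤ Mx - 1)]
        simp only [dxx]
      rw [e1, e2]
    rw [Finset.sum_congr rfl hstep, ← Finset.Ico_add_one_right_eq_Icc, Finset.sum_Ico_eq_sum_range]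
    have hMx1 : Mx - 1 + 1 - 1 = Mx - 1 := by omega
    rw [hMx1]
    have hone := oneD (Mx-1) (hx Mx) hx0 a (hwb 0 (Or.inl rfl) j hj2)
      (by have hE : Mx - 1 + 1 = Mx := by omega
          rw [hE]; exact hwb Mx (Or.inr rfl) j hj2)
    refine le_trans (le_of_eq (Finset.sum_congr rfl fun k hk => ?_)) hone
    simp only [show 1 + k = k + 1 from by omega, show k + 1 + 1 = k + 2 from rfl,
      Nat.add_sub_cancel]
  -- Term Y
  have hTY : ∑ i ∈ Icc 1 (Mx-1), ∑ j ∈ Icc 1 (My-1),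
      Hch Mx My v i j * Hcx Mx (dyy My v) i j ≤ 0 := by
    apply Finset.sum_nonpos
    intro i hi
    obtain ⟨hi1, hi2⟩ := Finset.mem_Icc.mp hi
    set a : ℕ → ℝ := fun j => Hcx Mx v i j with ha
    have hstep : ∀ j ∈ Icc 1 (My-1), Hch Mx My v i j * Hcx Mx (dyy My v) i j
        = (a j + (hy My)^2/12 * ((a (j+1) - 2*a j + a (j-1))/(hy My)^2)) *
          ((a (j+1) - 2*a j + a (j-1))/(hy My)^2) := by
      intro j hj
      obtain ⟨hj1, hj2⟩ := Finset.mem_Icc.mp hj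
      have e1 : Hcx Mx (dyy My v) i j
          = (a (j+1) - 2*a j + a (j-1))/(hy My)^2 := by
        rw [comm2]; simp only [dyy, ha]
      have e2 : Hch Mx My v i j
          = a j + (hy My)^2/12 * ((a (j+1) - 2*a j + a (j-1))/(hy My)^2) := by
        show Hcx Mx (Hcy My v) i j = _
        rw [commH]
        simp only [Hcy, ha]
        rw [if_pos (⟨hj1, hj2⟩ : 1 ≤ j ∧ j ≤ My - 1)]
        simp only [dyy]
      rw [e1, e2]
    rw [Finset.sum_congr rfl hstep, ← Finset.Ico_add_one_right_eq_Icc, Finset.sum_Ico_eq_sum_range]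
    have hMy1 : My - 1 + 1 - 1 = My - 1 := by omega
    rw [hMy1]
    have hone := oneD (My-1) (hy My) hy0 a (hub 0 (Or.inl rfl) i hi2)
      (by have hE : My - 1 + 1 = My := by omega
          rw [hE]; exact hub My (Or.inr rfl) i hi2)
    refine le_trans (le_of_eq (Finset.sum_congr rfl fun k hk => ?_)) hone
    simp only [show 1 + k = k + 1 from by omega, show k + 1 + 1 = k + 2 from rfl,
      Nat.add_sub_cancel]
  -- assemble
  have hsum : ∑ i ∈ Icc 1 (Mx-1), ∑ j ∈ Icc 1 (My-1),
      Hch Mx My v i j * Lamh Mx My v i j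
      = (∑ i ∈ Icc 1 (Mx-1), ∑ j ∈ Icc 1 (My-1),
          Hch Mx My v i j * Hcy My (dxx Mx v) i j)
        + ∑ i ∈ Icc 1 (Mx-1), ∑ j ∈ Icc 1 (My-1),
          Hch Mx My v i j * Hcx Mx (dyy My v) i j := by
    rw [← Finset.sum_add_distrib]
    refine Finset.sum_congr rfl fun i _ => ?_
    rw [← Finset.sum_add_distrib]
    refine Finset.sum_congr rfl fun j _ => ?_
    simp only [Lamh]; ring
  unfold innp
  rw [hsum]
  have hhp : (0:ℝ) ≤ hx Mx * hy My := le_of_lt (mul_pos hx0 hy0)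
  have hle : (∑ i ∈ Icc 1 (Mx-1), ∑ j ∈ Icc 1 (My-1),
          Hch Mx My v i j * Hcy My (dxx Mx v) i j)
        + (∑ i ∈ Icc 1 (Mx-1), ∑ j ∈ Icc 1 (My-1),
          Hch Mx My v i j * Hcx Mx (dyy My v) i j) ≤ 0 := by linarith
  calc hx Mx * hy My * _ ≤ hx Mx * hy My * 0 := mul_le_mul_of_nonneg_left hle hhp
    _ = 0 := mul_zero _
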